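/- Let A be an associative unital ℂ-algebra with elements T_1, P_1 satisfying T_1² = (q−q⁻¹)T_1 + 1 and P_1² = P_1, and define P_2 = q(P_1 T_1 P_1 − (q−q⁻¹)P_1), X_1 = 1 − P_1, X_2 = T_1 X_1 T_1. Then (1 − X_1)(T_1 − q)(1 − X_2)(1 − X_1) = q⁻³(P_2 − P_2²). In particular, (1−X_1)(T_1−q)(1−X_2)(1−X_1) = 0 if and only if P_2² = P_2. -/
import Mathlib


/-- In an associative unital ℂ-algebra with `T_1² = (q - q⁻¹)T_1 + 1` and `P_1² = P_1`,
setting `P_2 = q(P_1 T_1 P_1 - (q - q⁻¹)P_1)`, `X_1 = 1 - P_1`, `X_2 = T_1 X_1 T_1`,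
we have `(1 - X_1)(T_1 - q)(1 - X_2)(1 - X_1) = q⁻³(P_2 - P_2²)`, and in particular
this expression vanishes iff `P_2² = P_2`. -/
theorem stmt6 {A : Type*} [Ring A] [Algebra ℂ A] (q : ℂ) (hq : q ≠ 0)
    (T1 P1 : A)
    (hT : T1 * T1 = (q - q⁻¹) • T1 + 1)
    (hP : P1 * P1 = P1) :
    ∀ P2 X1 X2 : A,
      P2 = q • (P1 * T1 * P1 - (q - q⁻¹) • P1) →
      X1 = 1 - P1 → X2 = T1 * X1 * T1 →
      ((1 - X1) * (T1 - q • (1 : A)) * (1 - X2) * (1 - X1)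
          = (q ^ 3)⁻¹ • (P2 - P2 * P2)) ∧
      ((1 - X1) * (T1 - q • (1 : A)) * (1 - X2) * (1 - X1) = 0 ↔ P2 * P2 = P2) := by
  intro P2 X1 X2 hP2 hX1 hX2
  have hT' : ∀ x : A, T1 * (T1 * x) = (q - q⁻¹) • (T1 * x) + x := by
    intro x
    rw [← mul_assoc, hT, add_mul, one_mul, smul_mul_assoc]
  have hP' : ∀ x : A, P1 * (P1 * x) = P1 * x := by
    intro x
    rw [← mul_assoc, hP]
  have key : (1 - X1) * (T1 - q • (1 : A)) * (1 - X2) * (1 - X1)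
      = (q ^ 3)⁻¹ • (P2 - P2 * P2) := by
    subst hP2 hX1 hX2
    simp only [mul_sub, sub_mul, mul_add, add_mul, mul_one, one_mul,
      smul_mul_assoc, mul_smul_comm, smul_sub, smul_add, smul_smul, mul_assoc,
      hT, hP, hT', hP']
    match_scalars <;> field_simp <;> ring
  refine ⟨key, ?_⟩
  rw [key]
  have h3 : (q ^ 3)⁻¹ ≠ 0 := inv_ne_zero (pow_ne_zero 3 hq)
  rw [smul_eq_zero]
  constructor
  · rintro (h | h)
    · exact absurd h h3
    · rw [sub_eq_zero] at h; exact h.symm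
  · intro h
    right
    rw [sub_eq_zero]
    exact h.symm
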